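/- Let φ : A⁺ → S and ψ : B⁺ → T be homomorphisms from free semigroups on finite alphabets onto finite semigroups, and suppose the homomorphisms λ : S → T and α : A⁺ → B⁺ satisfy λ∘φ = ψ∘α. Then there is a unique homomorphism Λ : S_φ^KR → T_ψ^KR such that Λ∘φ^KR = ψ^KR∘α, and this Λ moreover satisfies π_ψ∘Λ = λ∘π_φ. -/

import Mathlib

set_option autoImplicit false

/-! ### General notions: topological semigroups, pseudovarieties, pro-V semigroups -/

/-- Continuity of a map into a type regarded with the discrete topology. -/
def ContinuousDisc {S : Type} [TopologicalSpace S] {T : Type} (f : S → T) : Prop :=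
  @Continuous S T _ ⊥ f

/-- A pseudovariety of semigroups: a class of finite semigroups closed under
homomorphic images, subsemigroups and finite direct products. -/
structure Pseudovariety : Type 1 where
  Mem : ∀ (S : Type) [Semigroup S], Prop
  finite : ∀ (S : Type) [Semigroup S], Mem S → Finite S
  closed_hom : ∀ (S T : Type) [Semigroup S] [Semigroup T] (f : S →ₙ* T),
    Mem S → Function.Surjective f → Mem T
  closed_sub : ∀ (S T : Type) [Semigroup S] [Semigroup T] (f : T →ₙ* S),
    Mem S → Function.Injective f → Mem T
  closed_prod : ∀ (ι : Type) [Finite ι] (S : ι → Type) [∀ i, Semigroup (S i)],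
    (∀ i, Mem (S i)) → Mem (∀ i, S i)

/-- A bundled member of a pseudovariety `V` (a finite semigroup belonging to `V`),
always regarded as carrying the discrete topology. -/
structure SgrIn (V : Pseudovariety) : Type 1 where
  carrier : Type
  [str : Semigroup carrier]
  mem : V.Mem carrier

attribute [instance] SgrIn.str

/-- A (bundled) topological semigroup. -/
structure TopSgr : Type 1 where
  carrier : Type
  [str : Semigroup carrier]
  [top : TopologicalSpace carrier]

attribute [instance] TopSgr.str TopSgr.top

/-- A finite semigroup regarded as a topological semigroup with the discrete topology. -/
def discTopSgr (S : Type) [Semigroup S] : TopSgr :=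
  @TopSgr.mk S _ ⊥

/-- A pro-V semigroup: a compact Hausdorff topological semigroup that is residually `V`. -/
def IsProV (V : Pseudovariety) (S : TopSgr) : Prop :=
  CompactSpace S.carrier ∧ T2Space S.carrier ∧ ContinuousMul S.carrier ∧
    ∀ x y : S.carrier, x ≠ y → ∃ (F : SgrIn V) (f : S.carrier →ₙ* F.carrier),
      ContinuousDisc ⇑f ∧ f x ≠ f y

/-- A profinite semigroup: a compact Hausdorff totally disconnected topological semigroup. -/
def IsProfiniteSgr (S : TopSgr) : Prop :=
  CompactSpace S.carrier ∧ T2Space S.carrier ∧ TotallyDisconnectedSpace S.carrier ∧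
    ContinuousMul S.carrier

/-- `C`, together with the continuous homomorphisms `φ i`, is a `V`-coproduct of the
family `S` of pro-`V` semigroups. -/
structure IsCoproduct (V : Pseudovariety) {I : Type} (S : I → TopSgr)
    (C : TopSgr) (φ : ∀ i, (S i).carrier →ₙ* C.carrier) : Prop where
  proV : IsProV V C
  cont : ∀ i, Continuous ⇑(φ i)
  universal : ∀ (T : TopSgr), IsProV V T →
    ∀ ψ : ∀ i, (S i).carrier →ₙ* T.carrier, (∀ i, Continuous ⇑(ψ i)) →
      ∃! Ψ : C.carrier →ₙ* T.carrier, Continuous ⇑Ψ ∧ ∀ i, Ψ.comp (φ i) = ψ i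

/-- `P`, together with the homomorphisms `e i`, is a free product (coproduct in the
category of semigroups) of the family `S`. -/
structure IsFreeProduct {I : Type} (S : I → Type) [∀ i, Semigroup (S i)]
    (P : Type) [Semigroup P] (e : ∀ i, S i →ₙ* P) : Prop where
  universal : ∀ (T : Type) [Semigroup T] (f : ∀ i, S i →ₙ* T),
    ∃! F : P →ₙ* T, ∀ i, F.comp (e i) = f i

/-! ### Particular pseudovarieties and related notions -/

/-- `V` contains the pseudovariety `Sl` of finite semilattices. -/
def ContainsSl (V : Pseudovariety) : Prop :=
  ∀ (S : Type) [Semigroup S] [Finite S],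
    (∀ x y : S, x * y = y * x) → (∀ x : S, x * x = x) → V.Mem S

/-- Green's `J`-preorder: `s ≤_J t`, i.e. `s ∈ S^I t S^I`. -/
def JBelow {S : Type} [Semigroup S] (s t : S) : Prop :=
  ∃ x y : WithOne S, x * (t : WithOne S) * y = (s : WithOne S)

/-- `V` contains the pseudovariety `J` of finite `J`-trivial semigroups. -/
def ContainsJ (V : Pseudovariety) : Prop :=
  ∀ (S : Type) [Semigroup S] [Finite S],
    (∀ s t : S, JBelow s t → JBelow t s → s = t) → V.Mem S

/-- The preimage of an idempotent under a semigroup homomorphism, as a subsemigroup. -/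
def fiberSub {S T : Type} [Semigroup S] [Semigroup T] (ψ : S →ₙ* T) (e : T)
    (he : e * e = e) : Subsemigroup S where
  carrier := ⇑ψ ⁻¹' {e}
  mul_mem' := by
    intro a b ha hb
    simp only [Set.mem_preimage, Set.mem_singleton_iff] at *
    rw [map_mul, ha, hb, he]

/-- The set of products of `n+1` elements of a semigroup (so `nthProds S 0 = S`). -/
def nthProds (S : Type) [Semigroup S] : ℕ → Set S
  | 0 => Set.univ
  | n + 1 => {x | ∃ a y, y ∈ nthProds S n ∧ x = a * y}

/-- A nilpotent semigroup: it has a zero `z` and some power of the semigroup is `{z}`. -/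
def IsNilpotentSgr (S : Type) [Semigroup S] : Prop :=
  ∃ z : S, (∀ x : S, z * x = z ∧ x * z = z) ∧ ∃ n : ℕ, nthProds S n ⊆ {z}

/-- A generator of the Mal'cev product `N ⓜ V`: a finite semigroup admitting a surjective
homomorphism onto a member of `V` all of whose idempotent fibers are nilpotent. -/
def NMalcevGen (V : Pseudovariety) (S : Type) [Semigroup S] : Prop :=
  Finite S ∧ ∃ (T : SgrIn V) (ψ : S →ₙ* T.carrier), Function.Surjective ψ ∧
    ∀ (e : T.carrier) (he : e * e = e), IsNilpotentSgr (fiberSub ψ e he)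

/-- The equality `N ⓜ V = V`: `V` coincides with the smallest pseudovariety containing
all finite semigroups admitting an `N`-morphism onto some member of `V`. -/
def NMalcevFixed (V : Pseudovariety) : Prop :=
  ∀ (S : Type) [Semigroup S] [Finite S],
    V.Mem S ↔ ∀ U : Pseudovariety,
      (∀ (S' : Type) [Semigroup S'], NMalcevGen V S' → U.Mem S') → U.Mem S

/-- A completely simple semigroup: simple with a primitive idempotent. -/
def IsCompletelySimple (S : Type) [Semigroup S] : Prop :=
  (∀ J : Set S, J.Nonempty → (∀ s x : S, x ∈ J → s * x ∈ J ∧ x * s ∈ J) → J = Set.univ) ∧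
  ∃ e : S, e * e = e ∧ ∀ f : S, f * f = f → e * f = f → f * e = f → f = e

/-- An equidivisible semigroup. -/
def Equidivisible (S : Type) [Semigroup S] : Prop :=
  ∀ u v x y : S, u * v = x * y →
    ∃ t : WithOne S,
      ((x : WithOne S) = (u : WithOne S) * t ∧ t * (y : WithOne S) = (v : WithOne S)) ∨
      ((x : WithOne S) * t = (u : WithOne S) ∧ (y : WithOne S) = t * (v : WithOne S))

/-! ### The two-sided Karnofsky–Rhodes expansion -/

/-- Vertices of the two-sided Cayley graph of `T`: pairs of elements of `T^I`. -/
abbrev KRVtx (T : Type) : Type := WithOne T × WithOne T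

/-- Edges of the two-sided Cayley graph: (source, label, target). -/
abbrev KREdge (A T : Type) : Type := KRVtx T × A × KRVtx T

/-- The image in `T^I` of a letter. -/
def letterImg {A T : Type} [Semigroup T] (ψ : FreeSemigroup A →ₙ* T) (a : A) : WithOne T :=
  (ψ (FreeSemigroup.of a) : WithOne T)

/-- The image in `T^I` of a (possibly empty) word. -/
def wordImg {A T : Type} [Semigroup T] (ψ : FreeSemigroup A →ₙ* T) (w : List A) : WithOne T :=
  (w.map (letterImg ψ)).prod

/-- `e` is an edge of the two-sided Cayley graph `Γ_ψ`. -/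
def IsKREdge {A T : Type} [Semigroup T] (ψ : FreeSemigroup A →ₙ* T) (e : KREdge A T) : Prop :=
  e.1.1 * letterImg ψ e.2.1 = e.2.2.1 ∧ e.1.2 = letterImg ψ e.2.1 * e.2.2.2

/-- One step along an edge of `Γ_ψ` (used to define directed paths). -/
def KRStep {A T : Type} [Semigroup T] (ψ : FreeSemigroup A →ₙ* T) (v w : KRVtx T) : Prop :=
  ∃ a : A, v.1 * letterImg ψ a = w.1 ∧ v.2 = letterImg ψ a * w.2

/-- A transition edge of `Γ_ψ`: an edge from whose target there is no directed path
back to its source. -/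
def IsTransEdge {A T : Type} [Semigroup T] (ψ : FreeSemigroup A →ₙ* T) (e : KREdge A T) : Prop :=
  IsKREdge ψ e ∧ ¬ Relation.ReflTransGen (KRStep ψ) e.2.2 e.1

/-- The list of letters of an element of the free semigroup. -/
def letters {A : Type} (u : FreeSemigroup A) : List A := u.head :: u.tail

/-- The set of edges of the path `p_u` of `Γ_ψ` from `(I, ψ u)` to `(ψ u, I)` labeled by `u`. -/
def pathEdges {A T : Type} [Semigroup T] (ψ : FreeSemigroup A →ₙ* T) (u : FreeSemigroup A) :
    Set (KREdge A T) :=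
  {e | ∃ (w₁ w₂ : List A) (a : A), letters u = w₁ ++ a :: w₂ ∧
    e = ((wordImg ψ w₁, wordImg ψ (a :: w₂)), a, (wordImg ψ (w₁ ++ [a]), wordImg ψ w₂))}

/-- The set `T(p_u)` of transition edges of `Γ_ψ` occurring in the path `p_u`. -/
def transEdges {A T : Type} [Semigroup T] (ψ : FreeSemigroup A →ₙ* T) (u : FreeSemigroup A) :
    Set (KREdge A T) :=
  {e ∈ pathEdges ψ u | IsTransEdge ψ e}

/-- A realization of the two-sided Karnofsky–Rhodes expansion of `ψ : A⁺ → T`: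
a semigroup `K = T_ψ^KR` together with the projection `ψ^KR : A⁺ → K`, which is onto and
identifies `u` and `v` exactly when `ψ u = ψ v` and `T(p_u) = T(p_v)`, and the canonical
homomorphism `π : T_ψ^KR → T` with `π ∘ ψ^KR = ψ`. -/
structure KRExp {A T : Type} [Semigroup T] (ψ : FreeSemigroup A →ₙ* T) : Type 1 where
  K : Type
  [strK : Semigroup K]
  [finK : Finite K]
  ψKR : FreeSemigroup A →ₙ* K
  π : K →ₙ* T
  surj : Function.Surjective ⇑ψKR
  ker : ∀ u v : FreeSemigroup A, ψKR u = ψKR v ↔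
    (ψ u = ψ v ∧ transEdges ψ u = transEdges ψ v)
  proj : π.comp ψKR = ψ

attribute [instance] KRExp.strK KRExp.finK

/-- The data of a two-sided Karnofsky–Rhodes expansion of a finite semigroup `T`:
a finite alphabet `A`, an onto homomorphism `ψ : A⁺ → T`, and a realization `T_ψ^KR`. -/
structure KRData (T : Type) [Semigroup T] : Type 1 where
  A : Type
  [finA : Finite A]
  ψ : FreeSemigroup A →ₙ* T
  surjψ : Function.Surjective ⇑ψ
  E : KRExp ψ

attribute [instance] KRData.finA

/-- `V` is closed under two-sided Karnofsky–Rhodes expansion. -/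
def ClosedUnderKR (V : Pseudovariety) : Prop :=
  ∀ (A T : Type) [Finite A] [Semigroup T], V.Mem T →
    ∀ (ψ : FreeSemigroup A →ₙ* T), Function.Surjective ⇑ψ →
      ∀ E : KRExp ψ, V.Mem E.K

/-! ### KR-covers -/

/-- `S` is a KR-cover of the finite semigroup `T`. -/
def IsKRCoverOf (S : TopSgr) (T : Type) [Semigroup T] [Finite T] : Prop :=
  (∃ φ : S.carrier →ₙ* T, ContinuousDisc ⇑φ ∧ Function.Surjective ⇑φ) ∧
  ∀ φ : S.carrier →ₙ* T, ContinuousDisc ⇑φ → Function.Surjective ⇑φ →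
    ∃ (D : KRData T) (φψ : S.carrier →ₙ* D.E.K),
      ContinuousDisc ⇑φψ ∧ D.E.π.comp φψ = φ

/-- `S` is a KR-cover: a KR-cover of each of its finite continuous homomorphic images. -/
def IsKRCover (S : TopSgr) : Prop :=
  ∀ (T : Type) [Semigroup T] [Finite T],
    (∃ φ : S.carrier →ₙ* T, ContinuousDisc ⇑φ ∧ Function.Surjective ⇑φ) →
    IsKRCoverOf S T

/-- `S` is `V`-projective. -/
def IsVProjective (V : Pseudovariety) (S : TopSgr) : Prop :=
  IsProV V S ∧ ∀ (T R : TopSgr), IsProV V T → IsProV V R →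
    ∀ (f : S.carrier →ₙ* T.carrier) (g : R.carrier →ₙ* T.carrier),
      Continuous ⇑f → Continuous ⇑g → Function.Surjective ⇑g →
        ∃ f' : S.carrier →ₙ* R.carrier, Continuous ⇑f' ∧ g.comp f' = f

/-! ### Strong KR-covers and letter super-cancellativity -/

/-- `κ : A → S` is a generating mapping: its image generates a dense subsemigroup. -/
def GeneratingMap {A : Type} (S : TopSgr) (κ : A → S.carrier) : Prop :=
  Dense (Subsemigroup.closure (Set.range κ) : Set S.carrier)

/-- The homomorphism `A⁺ → T` extending `a ↦ φ (κ a)`. -/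
def liftGen {A : Type} (S : TopSgr) (κ : A → S.carrier) {T : Type} [Semigroup T]
    (φ : S.carrier →ₙ* T) : FreeSemigroup A →ₙ* T :=
  FreeSemigroup.lift (fun a => φ (κ a))

/-- `S` is a strong KR-cover of the finite semigroup `T` with respect to the
generating mapping `κ`. -/
def IsStrongKRCoverOfWrt {A : Type} (S : TopSgr) (κ : A → S.carrier)
    (T : Type) [Semigroup T] [Finite T] : Prop :=
  ∀ φ : S.carrier →ₙ* T, ContinuousDisc ⇑φ → Function.Surjective ⇑φ →
    ∃ (E : KRExp (liftGen S κ φ)) (φκ : S.carrier →ₙ* E.K),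
      ContinuousDisc ⇑φκ ∧ E.π.comp φκ = φ ∧
      ∀ a : A, φκ (κ a) = E.ψKR (FreeSemigroup.of a)

/-- `S` is a strong KR-cover of the finite semigroup `T` (with respect to some
generating mapping with finite domain). -/
def IsStrongKRCoverOf (S : TopSgr) (T : Type) [Semigroup T] [Finite T] : Prop :=
  ∃ A : Type, Finite A ∧ ∃ κ : A → S.carrier, GeneratingMap S κ ∧
    IsStrongKRCoverOfWrt S κ T

/-- `S` is a strong KR-cover: a strong KR-cover of each of its finite continuous
homomorphic images. -/
def IsStrongKRCover (S : TopSgr) : Prop :=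
  ∀ (T : Type) [Semigroup T] [Finite T],
    (∃ φ : S.carrier →ₙ* T, ContinuousDisc ⇑φ ∧ Function.Surjective ⇑φ) →
    IsStrongKRCoverOf S T

/-- `S` is letter super-cancellative with respect to the subset `A` of `S`. -/
def IsLSC (S : TopSgr) (A : Set S.carrier) : Prop :=
  ∀ a ∈ A, ∀ b ∈ A, ∀ u v : WithOne S.carrier,
    (u * (a : WithOne S.carrier) = v * (b : WithOne S.carrier) → a = b ∧ u = v) ∧
    ((a : WithOne S.carrier) * u = (b : WithOne S.carrier) * v → a = b ∧ u = v)

/-! ### `S^I` and inverse limits -/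

/-- The sum topology on `S^I = S ∪ {I}`: the point `I` is isolated and `S` keeps
its topology. -/
def withOneTopology (S : Type) [TopologicalSpace S] : TopologicalSpace (WithOne S) where
  IsOpen V := IsOpen ((fun s : S => (s : WithOne S)) ⁻¹' V)
  isOpen_univ := by simp
  isOpen_inter := by
    intro U V hU hV
    rw [Set.preimage_inter]
    exact hU.inter hV
  isOpen_sUnion := by
    intro s hs
    rw [Set.preimage_sUnion]
    exact isOpen_biUnion hs

/-- `S^I` as a topological semigroup (in fact a monoid): `S` with an isolated identity
adjoined. -/
def withOneTopSgr (S : TopSgr) : TopSgr :=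
  @TopSgr.mk (WithOne S.carrier) _ (withOneTopology S.carrier)

/-- The inverse limit of a family of topological semigroups, as a subsemigroup of
the product. -/
def invLimSub {I : Type} [Preorder I] (S : I → TopSgr)
    (f : ∀ i j, j ≤ i → ((S i).carrier →ₙ* (S j).carrier)) :
    Subsemigroup (∀ i, (S i).carrier) where
  carrier := {x | ∀ i j (h : j ≤ i), f i j h (x i) = x j}
  mul_mem' := by
    intro a b ha hb i j h
    simp only [Pi.mul_apply, map_mul, ha i j h, hb i j h]

/-- The inverse limit as a topological semigroup (with the topology induced from the
product topology). -/
def invLimTopSgr {I : Type} [Preorder I] (S : I → TopSgr)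
    (f : ∀ i j, j ≤ i → ((S i).carrier →ₙ* (S j).carrier)) : TopSgr :=
  TopSgr.mk (invLimSub S f)
namespace KRFunctAux

open Relation

section Words

variable {A T : Type} [Semigroup T]

lemma letters_mul (u v : FreeSemigroup A) :
    letters (u * v) = letters u ++ letters v := rfl

lemma wordImg_nil (ψ : FreeSemigroup A →ₙ* T) : wordImg ψ ([] : List A) = 1 := rfl

lemma wordImg_cons (ψ : FreeSemigroup A →ₙ* T) (a : A) (w : List A) :
    wordImg ψ (a :: w) = letterImg ψ a * wordImg ψ w := by
  simp [wordImg]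

lemma wordImg_append (ψ : FreeSemigroup A →ₙ* T) (w1 w2 : List A) :
    wordImg ψ (w1 ++ w2) = wordImg ψ w1 * wordImg ψ w2 := by
  simp [wordImg]

lemma wordImg_letters (ψ : FreeSemigroup A →ₙ* T) (u : FreeSemigroup A) :
    wordImg ψ (letters u) = (ψ u : WithOne T) := by
  induction u using FreeSemigroup.recOnMul with
  | ih1 a => simp [letters, wordImg, letterImg]
  | ih2 x y hx hy =>
      rw [letters_mul, wordImg_append, hx, hy, map_mul]
      rfl

/-- One can move along a path labeled by a word `w` in the two-sided Cayley graph. -/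
lemma pathSteps (ψ : FreeSemigroup A →ₙ* T) (w : List A) (x z : WithOne T) :
    Relation.ReflTransGen (KRStep ψ) (x, wordImg ψ w * z) (x * wordImg ψ w, z) := by
  induction w generalizing x z with
  | nil => simpa [wordImg_nil] using (Relation.ReflTransGen.refl)
  | cons b w ih =>
      refine Relation.ReflTransGen.head (b := (x * letterImg ψ b, wordImg ψ w * z)) ?_ ?_
      · exact ⟨b, rfl, by rw [wordImg_cons, mul_assoc]⟩
      · simpa [wordImg_cons, mul_assoc] using ih (x * letterImg ψ b) z

end Words

section FlatMap

lemma flatMap_split {α β : Type} (f : α → List β) (l : List α) (W1 W2 : List β) (b : β)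
    (h : l.flatMap f = W1 ++ b :: W2) :
    ∃ l1 a l2 w1 w2, l = l1 ++ a :: l2 ∧ f a = w1 ++ b :: w2 ∧
      W1 = l1.flatMap f ++ w1 ∧ W2 = w2 ++ l2.flatMap f := by
  induction l generalizing W1 with
  | nil => simp at h
  | cons c l ih =>
      rw [List.flatMap_cons] at h
      rcases List.append_eq_append_iff.mp h with ⟨a', h1, h2⟩ | ⟨c', h1, h2⟩
      · obtain ⟨l1, a, l2, w1, w2, hl, hfa, hW1, hW2⟩ := ih a' h2
        exact ⟨c :: l1, a, l2, w1, w2, by rw [hl]; rfl, hfa,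
          by rw [h1, hW1, List.flatMap_cons, List.append_assoc], hW2⟩
      · cases c' with
        | nil =>
            obtain ⟨l1, a, l2, w1, w2, hl, hfa, hW1, hW2⟩ := ih [] (by simpa using h2.symm)
            obtain ⟨hl1, hw1⟩ := List.append_eq_nil_iff.mp hW1.symm
            refine ⟨c :: l1, a, l2, w1, w2, by rw [hl]; rfl, hfa, ?_, hW2⟩
            rw [List.flatMap_cons, hl1, hw1]
            simpa using h1.symm
        | cons b' c'' =>
            obtain ⟨hb, hW2⟩ : b = b' ∧ W2 = c'' ++ l.flatMap f := by
              have := h2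
              simp only [List.cons_append] at this
              exact ⟨(List.cons_eq_cons.mp this).1, (List.cons_eq_cons.mp this).2⟩
            exact ⟨[], c, l, W1, c'', rfl, by rw [h1, hb], by simp, hW2⟩

end FlatMap



lemma wmap_mul {S T : Type} [Semigroup S] [Semigroup T] (lam : S →ₙ* T) (x y : WithOne S) :
    WithOne.map lam (x * y) = WithOne.map lam x * WithOne.map lam y := by
  induction x using WithOne.cases_on <;> induction y using WithOne.cases_on <;>
    simp [← WithOne.coe_mul, WithOne.map_coe] <;> rfl

section Main

variable {A B S T : Type} [Semigroup S] [Semigroup T]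
variable (φ : FreeSemigroup A →ₙ* S) (ψ : FreeSemigroup B →ₙ* T)
  (lam : S →ₙ* T) (α : FreeSemigroup A →ₙ* FreeSemigroup B)

/-- The block of edges of `Γ_ψ` corresponding to an edge `e'` of `Γ_φ`. -/
def blockE (e' : KREdge A S) : Set (KREdge B T) :=
  {e | ∃ w1 b w2, letters (α (FreeSemigroup.of e'.2.1)) = w1 ++ b :: w2 ∧
    e = ((WithOne.map lam e'.1.1 * wordImg ψ w1,
          wordImg ψ (b :: w2) * WithOne.map lam e'.2.2.2), b,
         (WithOne.map lam e'.1.1 * wordImg ψ (w1 ++ [b]),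
          wordImg ψ w2 * WithOne.map lam e'.2.2.2))}

variable (hcomm : lam.comp φ = ψ.comp α)
include hcomm

lemma hcomm_apply (u : FreeSemigroup A) : lam (φ u) = ψ (α u) :=
  DFunLike.congr_fun hcomm u

lemma L_letter (a : A) :
    WithOne.map lam (letterImg φ a) =
      wordImg ψ (letters (α (FreeSemigroup.of a))) := by
  rw [wordImg_letters, letterImg, WithOne.map_coe, hcomm_apply φ ψ lam α hcomm]

lemma wordImg_flat (w : List A) :
    wordImg ψ (w.flatMap (fun a => letters (α (FreeSemigroup.of a)))) =
      WithOne.map lam (wordImg φ w) := by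
  induction w with
  | nil => simp [wordImg_nil]
  | cons a w ih =>
      rw [List.flatMap_cons, wordImg_append, ih, wordImg_cons, wmap_mul lam,
        L_letter φ ψ lam α hcomm]

lemma letters_α (u : FreeSemigroup A) :
    letters (α u) = (letters u).flatMap (fun a => letters (α (FreeSemigroup.of a))) := by
  induction u using FreeSemigroup.recOnMul with
  | ih1 a => simp [letters]
  | ih2 x y hx hy =>
      rw [map_mul, letters_mul, letters_mul, hx, hy, List.flatMap_append]

lemma reach_map {p q : KRVtx S} (h : Relation.ReflTransGen (KRStep φ) p q) :
    Relation.ReflTransGen (KRStep ψ)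
      (WithOne.map lam p.1, WithOne.map lam p.2)
      (WithOne.map lam q.1, WithOne.map lam q.2) := by
  induction h with
  | refl => exact Relation.ReflTransGen.refl
  | tail hpq hstep ih =>
      rename_i v w
      obtain ⟨a, h1, h2⟩ := hstep
      have key := pathSteps ψ (letters (α (FreeSemigroup.of a)))
        (WithOne.map lam v.1) (WithOne.map lam w.2)
      rw [← L_letter φ ψ lam α hcomm, ← wmap_mul lam, ← wmap_mul lam, ← h2, h1] at key
      exact ih.trans key

lemma claimB (e' : KREdge A S) (hke : IsKREdge φ e') (e : KREdge B T)
    (he : e ∈ blockE ψ lam α e') (hte : IsTransEdge ψ e) :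
    IsTransEdge φ e' := by
  refine ⟨hke, fun hreach => hte.2 ?_⟩
  obtain ⟨w1, b, w2, hsplit, rfl⟩ := he
  obtain ⟨h1, h2⟩ := hke
  -- path from e.2.2 to images of e'.2.2
  have path1 := pathSteps ψ w2
    (WithOne.map lam e'.1.1 * wordImg ψ (w1 ++ [b])) (WithOne.map lam e'.2.2.2)
  have e1 : WithOne.map lam e'.1.1 * wordImg ψ (w1 ++ [b]) * wordImg ψ w2 =
      WithOne.map lam e'.2.2.1 := by
    rw [← h1, wmap_mul lam, L_letter φ ψ lam α hcomm, hsplit, mul_assoc, ← wordImg_append,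
      List.append_assoc]
    simp
  rw [e1] at path1
  have path2 := reach_map φ ψ lam α hcomm hreach
  have path3 := pathSteps ψ w1 (WithOne.map lam e'.1.1)
    (wordImg ψ (b :: w2) * WithOne.map lam e'.2.2.2)
  have e2 : wordImg ψ w1 * (wordImg ψ (b :: w2) * WithOne.map lam e'.2.2.2) =
      WithOne.map lam e'.1.2 := by
    rw [h2, wmap_mul lam, L_letter φ ψ lam α hcomm, hsplit, wordImg_append, mul_assoc]
  rw [e2] at path3
  exact (path1.trans path2).trans path3

lemma isKREdge_of_pathEdges {u : FreeSemigroup A} {e' : KREdge A S}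
    (h : e' ∈ pathEdges φ u) : IsKREdge φ e' := by
  obtain ⟨l1, l2, a, hl, rfl⟩ := h
  exact ⟨by simp [wordImg_append, wordImg_cons, wordImg_nil], wordImg_cons φ a l2⟩

lemma pathEdges_decomp (u : FreeSemigroup A) (e : KREdge B T) :
    e ∈ pathEdges ψ (α u) ↔ ∃ e' ∈ pathEdges φ u, e ∈ blockE ψ lam α e' := by
  constructor
  · rintro ⟨W1, W2, b, hW, rfl⟩
    rw [letters_α φ ψ lam α hcomm] at hW
    obtain ⟨l1, a, l2, w1, w2, hl, hfa, hW1, hW2⟩ := flatMap_split _ _ _ _ _ hW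
    refine ⟨((wordImg φ l1, wordImg φ (a :: l2)), a, (wordImg φ (l1 ++ [a]), wordImg φ l2)),
      ⟨l1, l2, a, hl, rfl⟩, ⟨w1, b, w2, hfa, ?_⟩⟩
    subst hW1; subst hW2
    simp only [wordImg_append, wordImg_cons, wordImg_flat φ ψ lam α hcomm,
      List.append_assoc, List.cons_append, List.nil_append, mul_assoc]
  · rintro ⟨e', ⟨l1, l2, a, hl, rfl⟩, ⟨w1, b, w2, hfa, rfl⟩⟩
    refine ⟨l1.flatMap (fun a => letters (α (FreeSemigroup.of a))) ++ w1,
      w2 ++ l2.flatMap (fun a => letters (α (FreeSemigroup.of a))), b, ?_, ?_⟩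
    · rw [letters_α φ ψ lam α hcomm, hl, List.flatMap_append, List.flatMap_cons, hfa]
      simp
    · simp only [wordImg_append, wordImg_cons, wordImg_flat φ ψ lam α hcomm,
        List.append_assoc, List.cons_append, List.nil_append, mul_assoc]

lemma transEdges_image (u : FreeSemigroup A) :
    transEdges ψ (α u) =
      {e | (∃ e' ∈ transEdges φ u, e ∈ blockE ψ lam α e') ∧ IsTransEdge ψ e} := by
  ext e
  constructor
  · rintro ⟨hp, ht⟩
    obtain ⟨e', hpe', hbe⟩ := (pathEdges_decomp φ ψ lam α hcomm u e).mp hp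
    exact ⟨⟨e', ⟨hpe', claimB φ ψ lam α hcomm e'
      (isKREdge_of_pathEdges φ ψ lam α hcomm hpe') e hbe ht⟩, hbe⟩, ht⟩
  · rintro ⟨⟨e', ⟨hpe', _⟩, hbe⟩, ht⟩
    exact ⟨(pathEdges_decomp φ ψ lam α hcomm u e).mpr ⟨e', hpe', hbe⟩, ht⟩

end Main

end KRFunctAux

/-- Functoriality of the two-sided Karnofsky–Rhodes expansion. -/
theorem KR_functorial {A B S T : Type} [Finite A] [Finite B]
    [Semigroup S] [Finite S] [Semigroup T] [Finite T]
    (φ : FreeSemigroup A →ₙ* S) (hφ : Function.Surjective ⇑φ)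
    (ψ : FreeSemigroup B →ₙ* T) (hψ : Function.Surjective ⇑ψ)
    (lam : S →ₙ* T) (α : FreeSemigroup A →ₙ* FreeSemigroup B)
    (hcomm : lam.comp φ = ψ.comp α)
    (Eφ : KRExp φ) (Eψ : KRExp ψ) :
    (∃! Λ : Eφ.K →ₙ* Eψ.K, Λ.comp Eφ.ψKR = Eψ.ψKR.comp α) ∧
    (∀ Λ : Eφ.K →ₙ* Eψ.K, Λ.comp Eφ.ψKR = Eψ.ψKR.comp α →
      Eψ.π.comp Λ = lam.comp Eφ.π) := by
  classical
  have key : ∀ u v : FreeSemigroup A, Eφ.ψKR u = Eφ.ψKR v →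
      Eψ.ψKR (α u) = Eψ.ψKR (α v) := by
    intro u v h
    obtain ⟨h1, h2⟩ := (Eφ.ker u v).mp h
    refine (Eψ.ker _ _).mpr ⟨?_, ?_⟩
    · rw [← KRFunctAux.hcomm_apply φ ψ lam α hcomm,
        ← KRFunctAux.hcomm_apply φ ψ lam α hcomm, h1]
    · rw [KRFunctAux.transEdges_image φ ψ lam α hcomm u,
        KRFunctAux.transEdges_image φ ψ lam α hcomm v, h2]
  have hgk : ∀ k, Eφ.ψKR (Function.surjInv Eφ.surj k) = k :=
    fun k => Function.surjInv_eq Eφ.surj k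
  set g : Eφ.K → FreeSemigroup A := Function.surjInv Eφ.surj with hg
  have hmul : ∀ x y : Eφ.K,
      Eψ.ψKR (α (g (x * y))) = Eψ.ψKR (α (g x)) * Eψ.ψKR (α (g y)) := by
    intro x y
    have : Eφ.ψKR (g (x * y)) = Eφ.ψKR (g x * g y) := by
      rw [map_mul, hgk, hgk, hgk]
    rw [key _ _ this, map_mul, map_mul]
  refine ⟨⟨⟨fun k => Eψ.ψKR (α (g k)), hmul⟩, ?_, ?_⟩, ?_⟩
  · refine MulHom.ext fun u => ?_
    exact key _ _ (hgk (Eφ.ψKR u))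
  · intro Λ' hΛ'
    refine MulHom.ext fun k => ?_
    obtain ⟨u, rfl⟩ := Eφ.surj k
    have h1 := DFunLike.congr_fun hΛ' u
    simp only [MulHom.comp_apply] at h1
    simp only [MulHom.coe_mk, h1]
    exact (key _ _ (hgk (Eφ.ψKR u))).symm
  · intro Λ hΛ
    refine MulHom.ext fun k => ?_
    obtain ⟨u, rfl⟩ := Eφ.surj k
    have h1 := DFunLike.congr_fun hΛ u
    have h2 := DFunLike.congr_fun Eψ.proj (α u)
    have h3 := DFunLike.congr_fun Eφ.proj u
    have h4 := KRFunctAux.hcomm_apply φ ψ lam α hcomm u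
    simp only [MulHom.comp_apply] at h1 h2 h3 ⊢
    rw [h1, h2, h3, ← h4]
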